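/- The subgroup of SL(3,ℤ) consisting of all g satisfying gᵀ·B₁·g = B₁, gᵀ·B₂·g = B₂, and gᵀ·B₃·g = B₃, where B₁ = A(1,1,0) = [[2,0,1],[0,2,1],[1,1,2]], B₂ = [[4,−1,1],[−1,4,2],[1,2,4]] (which is 2·A(1,1/2,−1/2)) and B₃ = [[6,−2,2],[−2,6,2],[2,2,6]] (which is 3·A(2/3,2/3,−2/3)), is isomorphic to the Klein four group C₂ × C₂ (it has order 4). -/
import Mathlib


open Matrix

/-- `SL(3, ℤ)`, the group of 3 × 3 integer matrices of determinant one. -/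
abbrev SL3 := Matrix.SpecialLinearGroup (Fin 3) ℤ

/-- The stabilizer in `SL(3, ℤ)` of an integer matrix `B` under the congruence action
`A · g = gᵀ A g`. -/
def congrStab (B : Matrix (Fin 3) (Fin 3) ℤ) : Subgroup SL3 where
  carrier := {g | (g : Matrix (Fin 3) (Fin 3) ℤ)ᵀ * B * (g : Matrix (Fin 3) (Fin 3) ℤ) = B}
  one_mem' := by simp
  mul_mem' := by
    intro a b ha hb
    simp only [Set.mem_setOf_eq] at *
    calc ((a * b : SL3) : Matrix (Fin 3) (Fin 3) ℤ)ᵀ * B * ((a * b : SL3) : Matrix (Fin 3) (Fin 3) ℤ)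
        = (b : Matrix (Fin 3) (Fin 3) ℤ)ᵀ * ((a : Matrix (Fin 3) (Fin 3) ℤ)ᵀ * B * a) * b := by
          simp [Matrix.transpose_mul, Matrix.mul_assoc]
      _ = B := by rw [ha, hb]
  inv_mem' := by
    intro g hg
    simp only [Set.mem_setOf_eq] at *
    have hc : (g : Matrix (Fin 3) (Fin 3) ℤ) * ((g⁻¹ : SL3) : Matrix (Fin 3) (Fin 3) ℤ) = 1 := by
      rw [← Matrix.SpecialLinearGroup.coe_mul, mul_inv_cancel, Matrix.SpecialLinearGroup.coe_one]
    calc ((g⁻¹ : SL3) : Matrix (Fin 3) (Fin 3) ℤ)ᵀ * B * ((g⁻¹ : SL3) : Matrix (Fin 3) (Fin 3) ℤ)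
        = ((g⁻¹ : SL3) : Matrix (Fin 3) (Fin 3) ℤ)ᵀ *
            ((g : Matrix (Fin 3) (Fin 3) ℤ)ᵀ * B * g) *
            ((g⁻¹ : SL3) : Matrix (Fin 3) (Fin 3) ℤ) := by rw [hg]
      _ = ((g : Matrix (Fin 3) (Fin 3) ℤ) * ((g⁻¹ : SL3) : Matrix (Fin 3) (Fin 3) ℤ))ᵀ * B *
            ((g : Matrix (Fin 3) (Fin 3) ℤ) * ((g⁻¹ : SL3) : Matrix (Fin 3) (Fin 3) ℤ)) := by
          simp [Matrix.transpose_mul, Matrix.mul_assoc]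
      _ = B := by rw [hc]; simp

/-- The matrix `A(1,1,0)` representing the vertex `M′` of Soulé's fundamental domain. -/
def B₁ : Matrix (Fin 3) (Fin 3) ℤ := !![2, 0, 1; 0, 2, 1; 1, 1, 2]

/-- The matrix `2·A(1,1/2,-1/2)` representing the vertex `N′` of Soulé's fundamental domain. -/
def B₂ : Matrix (Fin 3) (Fin 3) ℤ := !![4, -1, 1; -1, 4, 2; 1, 2, 4]

/-- The matrix `3·A(2/3,2/3,-2/3)` representing the vertex `P` of Soulé's fundamental domain. -/
def B₃ : Matrix (Fin 3) (Fin 3) ℤ := !![6, -2, 2; -2, 6, 2; 2, 2, 6]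


section Aux

instance : DecidableEq SL3 := fun a b =>
  decidable_of_iff ((a : Matrix (Fin 3) (Fin 3) ℤ) = b) Subtype.ext_iff.symm

private lemma colSol (a b c : ℤ)
    (h1 : 2*a^2+2*b^2+2*c^2+2*a*c+2*b*c = 2)
    (h2 : 2*a*b + 2*a*c = 0)
    (h3 : 4*a*b + 2*a*c + 2*b*c = 0) :
    (a = 1 ∧ b = 0 ∧ c = 0) ∨ (a = -1 ∧ b = 0 ∧ c = 0) ∨
    (a = 0 ∧ b = 1 ∧ c = 0) ∨ (a = 0 ∧ b = -1 ∧ c = 0) ∨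
    (a = 0 ∧ b = 0 ∧ c = 1) ∨ (a = 0 ∧ b = 0 ∧ c = -1) ∨
    (a = 1 ∧ b = 1 ∧ c = -1) ∨ (a = -1 ∧ b = -1 ∧ c = 1) := by
  have key : a^2 + b^2 + (a+c)^2 + (b+c)^2 = 2 := by ring_nf; ring_nf at h1; linarith
  have ha : -1 ≤ a ∧ a ≤ 1 := by
    constructor <;>
      nlinarith [sq_nonneg b, sq_nonneg (a+c), sq_nonneg (b+c), sq_nonneg (a+1), sq_nonneg (a-1)]
  have hb : -1 ≤ b ∧ b ≤ 1 := by
    constructor <;>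
      nlinarith [sq_nonneg a, sq_nonneg (a+c), sq_nonneg (b+c), sq_nonneg (b+1), sq_nonneg (b-1)]
  have hc : -2 ≤ c ∧ c ≤ 2 := by
    constructor <;>
      nlinarith [sq_nonneg a, sq_nonneg b, sq_nonneg (b+c), sq_nonneg (a+c+1), sq_nonneg (a+c-1)]
  obtain ⟨ha1, ha2⟩ := ha; obtain ⟨hb1, hb2⟩ := hb; obtain ⟨hc1, hc2⟩ := hc
  interval_cases a <;> interval_cases b <;> interval_cases c <;> omega

set_option maxHeartbeats 4000000 in
private lemma classify (M : Matrix (Fin 3) (Fin 3) ℤ) (hdet : M.det = 1)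
    (h1 : Mᵀ * B₁ * M = B₁) (h2 : Mᵀ * B₂ * M = B₂) (h3 : Mᵀ * B₃ * M = B₃) :
    M = 1 ∨ M = !![-1,0,0;-1,0,-1;1,-1,0] ∨ M = !![0,-1,-1;0,-1,0;-1,1,0] ∨
      M = !![0,1,1;1,0,1;0,0,-1] := by
  obtain ⟨a,b,c,d,e,f,g,h,i, rfl⟩ : ∃ a b c d e f g h i, M = !![a,b,c;d,e,f;g,h,i] :=
    ⟨_,_,_,_,_,_,_,_,_, by ext i j; fin_cases i <;> fin_cases j <;> rfl⟩
  have htr : (!![a,b,c;d,e,f;g,h,i])ᵀ = !![a,d,g;b,e,h;c,f,i] := by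
    ext i j; fin_cases i <;> fin_cases j <;> rfl
  rw [Matrix.det_fin_three] at hdet
  simp at hdet
  rw [htr, ← Matrix.ext_iff] at h1 h2 h3
  have e00 := h1 0 0; have e11 := h1 1 1; have e22 := h1 2 2
  have e01 := h1 0 1; have e02 := h1 0 2; have e12 := h1 1 2
  have f00 := h2 0 0; have f11 := h2 1 1; have f22 := h2 2 2
  have f01 := h2 0 1; have f02 := h2 0 2; have f12 := h2 1 2
  have g00 := h3 0 0; have g11 := h3 1 1; have g22 := h3 2 2
  have g01 := h3 0 1; have g02 := h3 0 2; have g12 := h3 1 2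
  simp [Matrix.mul_apply, Fin.sum_univ_three, B₁, B₂, B₃] at e00 e11 e22 e01 e02 e12 f00 f11 f22 f01 f02 f12 g00 g11 g22 g01 g02 g12
  have c0 := colSol a d g (by linear_combination e00)
    (by linear_combination 2*e00 - f00) (by linear_combination 3*e00 - g00)
  have c1 := colSol b e h (by linear_combination e11)
    (by linear_combination 2*e11 - f11) (by linear_combination 3*e11 - g11)
  have c2 := colSol c f i (by linear_combination e22)
    (by linear_combination 2*e22 - f22) (by linear_combination 3*e22 - g22)
  clear h1 h2 h3 htr e00 e11 e22 f00 f11 f22 g00 g11 g22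
  rcases c0 with (⟨rfl,rfl,rfl⟩|⟨rfl,rfl,rfl⟩|⟨rfl,rfl,rfl⟩|⟨rfl,rfl,rfl⟩|⟨rfl,rfl,rfl⟩|⟨rfl,rfl,rfl⟩|⟨rfl,rfl,rfl⟩|⟨rfl,rfl,rfl⟩) <;>
  rcases c1 with (⟨rfl,rfl,rfl⟩|⟨rfl,rfl,rfl⟩|⟨rfl,rfl,rfl⟩|⟨rfl,rfl,rfl⟩|⟨rfl,rfl,rfl⟩|⟨rfl,rfl,rfl⟩|⟨rfl,rfl,rfl⟩|⟨rfl,rfl,rfl⟩) <;>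
  rcases c2 with (⟨rfl,rfl,rfl⟩|⟨rfl,rfl,rfl⟩|⟨rfl,rfl,rfl⟩|⟨rfl,rfl,rfl⟩|⟨rfl,rfl,rfl⟩|⟨rfl,rfl,rfl⟩|⟨rfl,rfl,rfl⟩|⟨rfl,rfl,rfl⟩) <;>
  first
    | (exfalso; omega)
    | (left; decide)
    | (right; left; decide)
    | (right; right; left; decide)
    | (right; right; right; decide)

/-- The first generating involution. -/
def w1 : SL3 := ⟨!![-1,0,0;-1,0,-1;1,-1,0], by decide⟩

/-- The second generating involution. -/
def w2 : SL3 := ⟨!![0,-1,-1;0,-1,0;-1,1,0], by decide⟩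

private lemma w1_mem : w1 ∈ congrStab B₁ ⊓ congrStab B₂ ⊓ congrStab B₃ := by
  refine Subgroup.mem_inf.2 ⟨Subgroup.mem_inf.2 ⟨?_, ?_⟩, ?_⟩ <;>
    · show _ᵀ * _ * _ = _
      decide

private lemma w2_mem : w2 ∈ congrStab B₁ ⊓ congrStab B₂ ⊓ congrStab B₃ := by
  refine Subgroup.mem_inf.2 ⟨Subgroup.mem_inf.2 ⟨?_, ?_⟩, ?_⟩ <;>
    · show _ᵀ * _ * _ = _
      decide

/-- The element `w1` of the stabilizer. -/
def u1 : ↥(congrStab B₁ ⊓ congrStab B₂ ⊓ congrStab B₃) := ⟨w1, w1_mem⟩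

/-- The element `w2` of the stabilizer. -/
def u2 : ↥(congrStab B₁ ⊓ congrStab B₂ ⊓ congrStab B₃) := ⟨w2, w2_mem⟩

/-- The homomorphism from the Klein four group onto the stabilizer. -/
def ψ : Multiplicative (ZMod 2) × Multiplicative (ZMod 2) →*
    ↥(congrStab B₁ ⊓ congrStab B₂ ⊓ congrStab B₃) where
  toFun p := u1 ^ (Multiplicative.toAdd p.1).val * u2 ^ (Multiplicative.toAdd p.2).val
  map_one' := by decide
  map_mul' := by decide

end Aux

/-- The subgroup `{g ∈ SL(3, ℤ) : gᵀ B₁ g = B₁, gᵀ B₂ g = B₂, gᵀ B₃ g = B₃}` (the stabilizer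
of the 2-cell `t₃ = M′N′P`) is isomorphic to the Klein four group `C₂ × C₂`; it has order 4. -/
theorem stabilizer_of_cell_M'N'P :
    Nonempty (↥(congrStab B₁ ⊓ congrStab B₂ ⊓ congrStab B₃) ≃*
      Multiplicative (ZMod 2) × Multiplicative (ZMod 2)) ∧
    Nat.card (congrStab B₁ ⊓ congrStab B₂ ⊓ congrStab B₃ : Subgroup SL3) = 4 := by
  have hinj : Function.Injective ψ := by decide
  have hsurj : Function.Surjective ψ := by
    rintro ⟨g, hg⟩
    rw [Subgroup.mem_inf, Subgroup.mem_inf] at hg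
    obtain ⟨⟨hg1, hg2⟩, hg3⟩ := hg
    have e1 : (g : Matrix (Fin 3) (Fin 3) ℤ)ᵀ * B₁ * g = B₁ := hg1
    have e2 : (g : Matrix (Fin 3) (Fin 3) ℤ)ᵀ * B₂ * g = B₂ := hg2
    have e3 : (g : Matrix (Fin 3) (Fin 3) ℤ)ᵀ * B₃ * g = B₃ := hg3
    rcases classify (g : Matrix (Fin 3) (Fin 3) ℤ) g.2 e1 e2 e3 with hM | hM | hM | hM
    · exact ⟨(Multiplicative.ofAdd 0, Multiplicative.ofAdd 0),
        Subtype.ext (Subtype.ext (by rw [hM]; decide))⟩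
    · exact ⟨(Multiplicative.ofAdd 1, Multiplicative.ofAdd 0),
        Subtype.ext (Subtype.ext (by rw [hM]; decide))⟩
    · exact ⟨(Multiplicative.ofAdd 0, Multiplicative.ofAdd 1),
        Subtype.ext (Subtype.ext (by rw [hM]; decide))⟩
    · exact ⟨(Multiplicative.ofAdd 1, Multiplicative.ofAdd 1),
        Subtype.ext (Subtype.ext (by rw [hM]; decide))⟩
  let e := (MulEquiv.ofBijective ψ ⟨hinj, hsurj⟩).symm
  refine ⟨⟨e⟩, ?_⟩
  rw [Nat.card_congr e.toEquiv]
  simp [Nat.card_eq_fintype_card]
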